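/- arXiv:1905.02516 — 2 statements merged into one kernel-verified Lean document; each statement's English description precedes it below -/
import Mathlib

section
/- Let (a_n)_{n≥1} be a sequence of positive reals and suppose there exist constants 0 < c₁ ≤ c₂, s > 1/2 and α ∈ ℝ with c₁·n^{−s}·log^{α}(n) ≤ a_n ≤ c₂·n^{−s}·log^{α}(n) for all n ≥ 2. Then the sequence β_k = ((1/k)·Σ_{j ≥ k} a_j²)^{1/2} is finite for all k and satisfies β_k ≍ a_k, i.e., there are constants 0 < c ≤ C with c·a_k ≤ β_k ≤ C·a_k for all k ≥ 2. -/
/-- For a sequence of positive reals, `β_k = ((1/k) · ∑_{j ≥ k} a_j²)^{1/2}`. -/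
noncomputable def betaSeq (a : ℕ → ℝ) (k : ℕ) : ℝ :=
  Real.sqrt ((1 / (k : ℝ)) * ∑' j : ℕ, a (k + j) ^ 2)

open Real Finset

/-- Polynomial growth of powers of logs absorbed into a small exponential. -/
lemma logratio (β δ : ℝ) (hδ : 0 < δ) :
    ∃ M : ℝ, 1 ≤ M ∧ ∀ x y : ℝ, Real.log 2 ≤ x → x ≤ y →
      y ^ β ≤ M * x ^ β * Real.exp (δ * (y - x)) := by
  have hl2 : (0:ℝ) < Real.log 2 := Real.log_pos one_lt_two
  rcases le_or_gt β 0 with hβ | hβ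
  · refine ⟨1, le_refl 1, fun x y hx hxy => ?_⟩
    have hx0 : 0 < x := hl2.trans_le hx
    have h1 : y ^ β ≤ x ^ β := Real.rpow_le_rpow_of_nonpos hx0 hxy hβ
    have h2 : (1:ℝ) ≤ Real.exp (δ * (y - x)) := by
      apply Real.one_le_exp; nlinarith
    nlinarith [Real.rpow_nonneg hx0.le β]
  · set m : ℝ := max 1 (β / (δ * Real.log 2)) with hm
    have hm1 : (1:ℝ) ≤ m := le_max_left _ _
    have hm0 : (0:ℝ) < m := lt_of_lt_of_le one_pos hm1
    have hkey : β / m ≤ δ * Real.log 2 := by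
      rw [div_le_iff₀ hm0]
      have h : β / (δ * Real.log 2) ≤ m := le_max_right _ _
      rw [div_le_iff₀ (by positivity)] at h
      nlinarith
    refine ⟨m ^ β, ?_, fun x y hx hxy => ?_⟩
    · calc (1:ℝ) = 1 ^ β := (Real.one_rpow β).symm
        _ ≤ m ^ β := Real.rpow_le_rpow zero_le_one hm1 hβ.le
    have hx0 : 0 < x := hl2.trans_le hx
    have hy0 : 0 < y := hx0.trans_le hxy
    set v : ℝ := (y - x) / Real.log 2 with hv
    have hv0 : 0 ≤ v := div_nonneg (by linarith) hl2.le
    have hvl : v * Real.log 2 = y - x := div_mul_cancel₀ _ hl2.ne'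
    have h1 : y ≤ x * (1 + v) := by nlinarith [mul_le_mul_of_nonneg_right hx hv0]
    have h2 : 1 + v ≤ m * Real.exp (v / m) := by
      have := mul_le_mul_of_nonneg_left (Real.add_one_le_exp (v / m)) hm0.le
      have hc : m * (v / m + 1) = v + m := by field_simp
      nlinarith
    calc y ^ β ≤ (x * (1 + v)) ^ β := Real.rpow_le_rpow hy0.le h1 hβ.le
      _ = x ^ β * (1 + v) ^ β := Real.mul_rpow hx0.le (by linarith)
      _ ≤ x ^ β * (m * Real.exp (v / m)) ^ β := by
          exact mul_le_mul_of_nonneg_left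
            (Real.rpow_le_rpow (by linarith) h2 hβ.le) (Real.rpow_nonneg hx0.le β)
      _ = x ^ β * (m ^ β * (Real.exp (v / m)) ^ β) := by
          rw [Real.mul_rpow hm0.le (Real.exp_pos _).le]
      _ = m ^ β * x ^ β * Real.exp (v / m * β) := by
          rw [Real.rpow_def_of_pos (Real.exp_pos _), Real.log_exp]; ring
      _ ≤ m ^ β * x ^ β * Real.exp (δ * (y - x)) := by
          refine mul_le_mul_of_nonneg_left (Real.exp_le_exp.mpr ?_) (by positivity)
          calc v / m * β = v * (β / m) := by ring
            _ ≤ v * (δ * Real.log 2) := mul_le_mul_of_nonneg_left hkey hv0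
            _ = δ * (y - x) := by rw [← hvl]; ring

/-- Telescoping bound for one term of the tail of `∑ n^{-q}`. -/
lemma aux_tele (q : ℝ) (hq : 1 < q) (x : ℝ) (hx : 1 ≤ x) :
    (x + 1) ^ (-q) ≤ (q - 1)⁻¹ * (x ^ (1 - q) - (x + 1) ^ (1 - q)) := by
  have hx0 : (0:ℝ) < x := lt_of_lt_of_le one_pos hx
  have hx1 : (0:ℝ) < x + 1 := by linarith
  set p : ℝ := q - 1 with hp
  have hp0 : 0 < p := by simp [hp]; linarith
  set u : ℝ := 1 / (x + 1) with hu
  have hu0 : 0 < u := by positivity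
  have hu1 : u < 1 := by rw [hu, div_lt_one hx1]; linarith
  set w : ℝ := x / (x + 1) with hw
  have hw0 : 0 < w := by positivity
  have hwu : w = 1 - u := by rw [hw, hu]; field_simp; ring
  -- key: 1 + p * u ≤ w ^ (1 - q)
  have hkey : 1 + p * u ≤ w ^ (1 - q) := by
    have e1 : w ^ (1 - q) = Real.exp ((-p) * Real.log w) := by
      rw [Real.rpow_def_of_pos hw0, hp]; congr 1; ring
    have hlw : Real.log w ≤ -u := by
      have := Real.log_le_sub_one_of_pos hw0
      rw [hwu] at this ⊢; linarith
    have h2 : p * u ≤ (-p) * Real.log w := by nlinarith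
    calc 1 + p * u ≤ Real.exp (p * u) := by
          have := Real.add_one_le_exp (p * u); linarith
      _ ≤ Real.exp ((-p) * Real.log w) := Real.exp_le_exp.mpr h2
      _ = w ^ (1 - q) := e1.symm
  have e2 : x ^ (1 - q) = (x + 1) ^ (1 - q) * w ^ (1 - q) := by
    rw [← Real.mul_rpow hx1.le hw0.le, hw]
    congr 1; field_simp
  have e3 : (x + 1) ^ (1 - q) * u = (x + 1) ^ (-q) := by
    rw [hu, one_div, ← Real.rpow_neg_one (x + 1), ← Real.rpow_add hx1]
    congr 1; ring
  have h4 : p * (x + 1) ^ (-q) ≤ x ^ (1 - q) - (x + 1) ^ (1 - q) := by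
    have h5 : (x + 1) ^ (1 - q) * (1 + p * u) ≤ x ^ (1 - q) := by
      rw [e2]
      exact mul_le_mul_of_nonneg_left hkey (Real.rpow_nonneg hx1.le _)
    calc p * (x + 1) ^ (-q) = (x + 1) ^ (1 - q) * (1 + p * u) - (x + 1) ^ (1 - q) := by
          rw [mul_add, mul_one, mul_comm p u, ← mul_assoc, e3]; ring
      _ ≤ x ^ (1 - q) - (x + 1) ^ (1 - q) := by linarith
  rw [le_inv_mul_iff₀ hp0]
  exact h4

/-- Tail sum estimate for `∑_{j≥k} j^{-q}`, `q > 1`. -/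
lemma tailsum (q : ℝ) (hq : 1 < q) (k : ℕ) (hk : 2 ≤ k) :
    Summable (fun j : ℕ => ((k:ℝ) + j) ^ (-q)) ∧
    ∑' j : ℕ, ((k:ℝ) + j) ^ (-q) ≤ (q - 1)⁻¹ * ((k:ℝ) - 1) ^ (1 - q) := by
  have hk1 : (1:ℝ) ≤ (k:ℝ) - 1 := by
    have : (2:ℝ) ≤ (k:ℝ) := by exact_mod_cast hk
    linarith
  set g : ℕ → ℝ := fun j => ((k:ℝ) - 1 + j) ^ (1 - q) with hg
  have hterm : ∀ j : ℕ, ((k:ℝ) + j) ^ (-q) ≤ (q - 1)⁻¹ * (g j - g (j + 1)) := by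
    intro j
    have hx : (1:ℝ) ≤ (k:ℝ) - 1 + j := by
      have : (0:ℝ) ≤ (j:ℝ) := Nat.cast_nonneg j
      linarith
    have := aux_tele q hq ((k:ℝ) - 1 + j) hx
    have e1 : (k:ℝ) - 1 + j + 1 = (k:ℝ) + j := by ring
    have e2 : g (j + 1) = ((k:ℝ) - 1 + j + 1) ^ (1 - q) := by
      simp only [hg]; push_cast; ring_nf
    rw [e1] at this
    rw [e2, e1]
    exact this
  have hbound : ∀ n : ℕ, ∑ j ∈ Finset.range n, ((k:ℝ) + j) ^ (-q) ≤
      (q - 1)⁻¹ * ((k:ℝ) - 1) ^ (1 - q) := by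
    intro n
    calc ∑ j ∈ Finset.range n, ((k:ℝ) + j) ^ (-q)
        ≤ ∑ j ∈ Finset.range n, (q - 1)⁻¹ * (g j - g (j + 1)) :=
          Finset.sum_le_sum (fun j _ => hterm j)
      _ = (q - 1)⁻¹ * (g 0 - g n) := by
          rw [← Finset.mul_sum, Finset.sum_range_sub' g n]
      _ ≤ (q - 1)⁻¹ * g 0 := by
          have hgn : 0 ≤ g n := Real.rpow_nonneg
            (by have := (Nat.cast_nonneg n : (0:ℝ) ≤ n); linarith) _
          have : (0:ℝ) ≤ (q - 1)⁻¹ := inv_nonneg.mpr (by linarith)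
          nlinarith
      _ = (q - 1)⁻¹ * ((k:ℝ) - 1) ^ (1 - q) := by simp [hg]
  have hnn : ∀ j : ℕ, 0 ≤ ((k:ℝ) + j) ^ (-q) := fun j => Real.rpow_nonneg (by positivity) _
  have hsum : Summable (fun j : ℕ => ((k:ℝ) + j) ^ (-q)) :=
    summable_of_sum_range_le hnn hbound
  exact ⟨hsum, tsum_le_of_sum_range_le hnn hbound⟩

/-- **Lemma (case `s > 1/2`).** If `a_n ≍ n^{-s} log^α n` with `s > 1/2`, then the tail sums
`∑_{j ≥ k} a_j²` are finite and `β_k ≍ a_k`. -/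
theorem beta_asymp_of_superhalf (a : ℕ → ℝ) (hpos : ∀ n, 1 ≤ n → 0 < a n)
    (c₁ c₂ s α : ℝ) (hc₁ : 0 < c₁) (hc : c₁ ≤ c₂) (hs : 1 / 2 < s)
    (hlow : ∀ n : ℕ, 2 ≤ n → c₁ * (n : ℝ) ^ (-s) * Real.log n ^ α ≤ a n)
    (hupp : ∀ n : ℕ, 2 ≤ n → a n ≤ c₂ * (n : ℝ) ^ (-s) * Real.log n ^ α) :
    (∀ k : ℕ, Summable fun j : ℕ => a (k + j) ^ 2) ∧
      ∃ c C : ℝ, 0 < c ∧ c ≤ C ∧ ∀ k : ℕ, 2 ≤ k →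
        c * a k ≤ betaSeq a k ∧ betaSeq a k ≤ C * a k := by
  have hc₂ : 0 < c₂ := hc₁.trans_le hc
  set δ : ℝ := (2*s - 1)/4 with hδdef
  set r : ℝ := (2*s + 1)/4 with hrdef
  set q : ℝ := (2*s + 1)/2 with hqdef
  have hδ : 0 < δ := by rw [hδdef]; linarith
  have hq : 1 < q := by rw [hqdef]; linarith
  obtain ⟨M, hM1, hM⟩ := logratio α δ hδ
  set K : ℝ := c₂ * M / c₁ with hKdef
  have hK0 : 0 < K := by positivity
  have eK : K * c₁ = c₂ * M := by rw [hKdef]; field_simp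
  -- upper pointwise ratio bound
  have ratio : ∀ k j : ℕ, 2 ≤ k → k ≤ j → a j ≤ K * a k * ((k:ℝ)/(j:ℝ)) ^ r := by
    intro k j hk hkj
    have hj2 : 2 ≤ j := hk.trans hkj
    have hk0 : (0:ℝ) < k := by exact_mod_cast Nat.lt_of_lt_of_le Nat.zero_lt_two hk
    have hj0 : (0:ℝ) < j := by exact_mod_cast Nat.lt_of_lt_of_le Nat.zero_lt_two hj2
    have hkjr : (k:ℝ) ≤ j := Nat.cast_le.mpr hkj
    have hLk2 : Real.log 2 ≤ Real.log k :=
      Real.log_le_log two_pos (by exact_mod_cast hk)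
    have hLkj : Real.log k ≤ Real.log j := Real.log_le_log hk0 hkjr
    have hLk0 : 0 < Real.log k := lt_of_lt_of_le (Real.log_pos one_lt_two) hLk2
    have h2 := hM _ _ hLk2 hLkj
    have e1 : (j:ℝ)^(-s) * Real.exp (δ * (Real.log j - Real.log k))
        = (k:ℝ)^(-s) * ((k:ℝ)/(j:ℝ))^r := by
      rw [Real.rpow_def_of_pos hj0, Real.rpow_def_of_pos hk0,
        Real.rpow_def_of_pos (div_pos hk0 hj0), Real.log_div hk0.ne' hj0.ne',
        ← Real.exp_add, ← Real.exp_add]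
      congr 1
      rw [hδdef, hrdef]; ring
    calc a j ≤ c₂ * (j:ℝ)^(-s) * Real.log j ^ α := hupp j hj2
      _ ≤ c₂ * (j:ℝ)^(-s) *
          (M * Real.log k ^ α * Real.exp (δ * (Real.log j - Real.log k))) := by
          exact mul_le_mul_of_nonneg_left h2 (by positivity)
      _ = (c₂ * M * Real.log k ^ α) *
          ((j:ℝ)^(-s) * Real.exp (δ * (Real.log j - Real.log k))) := by ring
      _ = (c₂ * M * Real.log k ^ α) * ((k:ℝ)^(-s) * ((k:ℝ)/(j:ℝ))^r) := by rw [e1]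
      _ = K * (c₁ * (k:ℝ)^(-s) * Real.log k ^ α) * ((k:ℝ)/(j:ℝ))^r := by
          rw [← eK]; ring
      _ ≤ K * a k * ((k:ℝ)/(j:ℝ))^r := by
          exact mul_le_mul_of_nonneg_right
            (mul_le_mul_of_nonneg_left (hlow k hk) hK0.le)
            (Real.rpow_nonneg (by positivity) r)
  -- squared version
  have hsq : ∀ y : ℝ, 0 ≤ y → (y ^ r) ^ 2 = y ^ q := by
    intro y hy
    rw [← Real.rpow_natCast (y ^ r) 2, ← Real.rpow_mul hy]
    congr 1
    rw [hrdef, hqdef]; push_cast; ring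
  have ratio2 : ∀ k j : ℕ, 2 ≤ k → k ≤ j →
      a j ^ 2 ≤ K^2 * a k ^ 2 * ((k:ℝ)/(j:ℝ)) ^ q := by
    intro k j hk hkj
    have haj0 : 0 ≤ a j := (hpos j (by omega)).le
    have h := pow_le_pow_left₀ haj0 (ratio k j hk hkj) 2
    calc a j ^ 2 ≤ (K * a k * ((k:ℝ)/(j:ℝ)) ^ r) ^ 2 := h
      _ = K^2 * a k ^ 2 * (((k:ℝ)/(j:ℝ)) ^ r) ^ 2 := by ring
      _ = K^2 * a k ^ 2 * ((k:ℝ)/(j:ℝ)) ^ q := by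
          rw [hsq _ (by positivity)]
  -- summability and tail upper bound for k ≥ 2
  have main : ∀ k : ℕ, 2 ≤ k → Summable (fun j : ℕ => a (k + j) ^ 2) ∧
      ∑' j : ℕ, a (k + j) ^ 2 ≤ (K^2 * (q-1)⁻¹ * (2:ℝ)^(q-1)) * (a k ^ 2 * k) := by
    intro k hk
    have hk0 : (0:ℝ) < k := by exact_mod_cast Nat.lt_of_lt_of_le Nat.zero_lt_two hk
    have hk2 : (2:ℝ) ≤ (k:ℝ) := by exact_mod_cast hk
    obtain ⟨hsumq, htsq⟩ := tailsum q hq k hk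
    have hb : ∀ j : ℕ, a (k+j) ^ 2 ≤ (K^2 * a k ^ 2 * (k:ℝ)^q) * ((k:ℝ) + j)^(-q) := by
      intro j
      have h := ratio2 k (k+j) hk (Nat.le_add_right k j)
      have hkj0 : (0:ℝ) < (k:ℝ) + j := by positivity
      have e : ((k:ℝ)/((k:ℝ)+j))^q = (k:ℝ)^q * ((k:ℝ)+j)^(-q) := by
        rw [Real.div_rpow (Nat.cast_nonneg k) hkj0.le, Real.rpow_neg hkj0.le,
          div_eq_mul_inv]
      push_cast at h
      calc a (k+j) ^ 2 ≤ K^2 * a k ^ 2 * (((k:ℝ))/((k:ℝ)+j))^q := h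
        _ = (K^2 * a k ^ 2 * (k:ℝ)^q) * ((k:ℝ)+j)^(-q) := by rw [e]; ring
    have hgsum : Summable (fun j : ℕ => (K^2 * a k ^ 2 * (k:ℝ)^q) * ((k:ℝ)+j)^(-q)) :=
      hsumq.mul_left _
    have hS : Summable (fun j : ℕ => a (k+j) ^ 2) :=
      Summable.of_nonneg_of_le (fun j => sq_nonneg _) hb hgsum
    refine ⟨hS, ?_⟩
    have hq1 : (0:ℝ) < (q-1)⁻¹ := inv_pos.mpr (by linarith)
    have hT : ∑' j : ℕ, a (k+j) ^ 2
        ≤ (K^2 * a k ^ 2 * (k:ℝ)^q) * ((q-1)⁻¹ * ((k:ℝ)-1)^(1-q)) := by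
      calc ∑' j : ℕ, a (k+j) ^ 2
          ≤ ∑' j : ℕ, (K^2 * a k ^ 2 * (k:ℝ)^q) * ((k:ℝ)+j)^(-q) :=
            Summable.tsum_le_tsum hb hS hgsum
        _ = (K^2 * a k ^ 2 * (k:ℝ)^q) * ∑' j : ℕ, ((k:ℝ)+j)^(-q) := tsum_mul_left
        _ ≤ (K^2 * a k ^ 2 * (k:ℝ)^q) * ((q-1)⁻¹ * ((k:ℝ)-1)^(1-q)) := by
            exact mul_le_mul_of_nonneg_left htsq (by positivity)
    have h1 : ((k:ℝ)-1)^(1-q) ≤ ((k:ℝ)/2)^(1-q) :=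
      Real.rpow_le_rpow_of_nonpos (by linarith) (by linarith) (by linarith)
    have e4 : (k:ℝ)^q * ((k:ℝ)/2)^(1-q) = (2:ℝ)^(q-1) * k := by
      have h2' : ((k:ℝ)/2)^(1-q) = (k:ℝ)^(1-q) * (2:ℝ)^(q-1) := by
        rw [Real.div_rpow hk0.le (by norm_num), div_eq_mul_inv,
          ← Real.rpow_neg (by norm_num : (0:ℝ) ≤ 2)]
        congr 1
        ring
      rw [h2', ← mul_assoc, ← Real.rpow_add hk0]
      norm_num
      ring
    calc ∑' j : ℕ, a (k+j) ^ 2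
        ≤ (K^2 * a k ^ 2 * (k:ℝ)^q) * ((q-1)⁻¹ * ((k:ℝ)-1)^(1-q)) := hT
      _ ≤ (K^2 * a k ^ 2 * (k:ℝ)^q) * ((q-1)⁻¹ * ((k:ℝ)/2)^(1-q)) := by
          exact mul_le_mul_of_nonneg_left
            (mul_le_mul_of_nonneg_left h1 hq1.le) (by positivity)
      _ = (K^2 * (q-1)⁻¹ * (2:ℝ)^(q-1)) * (a k ^ 2 * k) := by
          linear_combination (K^2 * (q-1)⁻¹ * a k ^ 2) * e4
  -- lower pointwise bound on the block [k, 2k)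
  set cL : ℝ := c₁ / c₂ * (2:ℝ)^(-s) * min 1 ((2:ℝ)^α) with hcLdef
  have hmin0 : (0:ℝ) < min 1 ((2:ℝ)^α) :=
    lt_min one_pos (Real.rpow_pos_of_pos two_pos α)
  have hcL0 : 0 < cL := by
    rw [hcLdef]
    have := Real.rpow_pos_of_pos (two_pos (α := ℝ)) (-s)
    positivity
  have low2 : ∀ k j : ℕ, 2 ≤ k → j < k → cL * a k ≤ a (k + j) := by
    intro k j hk hjk
    have hk0 : (0:ℝ) < k := by exact_mod_cast Nat.lt_of_lt_of_le Nat.zero_lt_two hk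
    have hn2 : 2 ≤ k + j := by omega
    have hn0 : (0:ℝ) < ((k:ℝ) + j) := by positivity
    have hnk : ((k:ℝ) + j) ≤ 2 * k := by
      have : (j:ℝ) ≤ (k:ℝ) := by exact_mod_cast hjk.le
      linarith
    have hLk2 : Real.log 2 ≤ Real.log k :=
      Real.log_le_log two_pos (by exact_mod_cast hk)
    have hLk0 : 0 < Real.log k := lt_of_lt_of_le (Real.log_pos one_lt_two) hLk2
    have hLkn : Real.log k ≤ Real.log ((k:ℝ) + j) := by
      apply Real.log_le_log hk0; linarith [Nat.cast_nonneg (α := ℝ) j]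
    have hLn0 : 0 < Real.log ((k:ℝ) + j) := lt_of_lt_of_le hLk0 hLkn
    have hLn2k : Real.log ((k:ℝ) + j) ≤ 2 * Real.log k := by
      calc Real.log ((k:ℝ) + j) ≤ Real.log (2 * k) := Real.log_le_log hn0 hnk
        _ = Real.log 2 + Real.log k := Real.log_mul two_ne_zero hk0.ne'
        _ ≤ 2 * Real.log k := by linarith
    have piece1 : (2:ℝ)^(-s) * (k:ℝ)^(-s) ≤ ((k:ℝ) + j)^(-s) := by
      rw [← Real.mul_rpow (by norm_num) hk0.le]
      exact Real.rpow_le_rpow_of_nonpos hn0 hnk (by linarith)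
    have piece2 : min 1 ((2:ℝ)^α) * Real.log k ^ α ≤ Real.log ((k:ℝ) + j) ^ α := by
      rcases le_or_gt 0 α with hα | hα
      · calc min 1 ((2:ℝ)^α) * Real.log k ^ α ≤ 1 * Real.log k ^ α := by
              exact mul_le_mul_of_nonneg_right (min_le_left _ _)
                (Real.rpow_nonneg hLk0.le α)
          _ = Real.log k ^ α := one_mul _
          _ ≤ Real.log ((k:ℝ) + j) ^ α := Real.rpow_le_rpow hLk0.le hLkn hα
      · calc min 1 ((2:ℝ)^α) * Real.log k ^ α ≤ (2:ℝ)^α * Real.log k ^ α := by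
              exact mul_le_mul_of_nonneg_right (min_le_right _ _)
                (Real.rpow_nonneg hLk0.le α)
          _ = (2 * Real.log k) ^ α := (Real.mul_rpow (by norm_num) hLk0.le).symm
          _ ≤ Real.log ((k:ℝ) + j) ^ α :=
              Real.rpow_le_rpow_of_nonpos hLn0 hLn2k hα.le
    have key : cL * (c₂ * (k:ℝ)^(-s) * Real.log k ^ α)
        = (c₁ * ((2:ℝ)^(-s) * (k:ℝ)^(-s))) * (min 1 ((2:ℝ)^α) * Real.log k ^ α) := by
      rw [hcLdef]; field_simp
    have cast1 : ((k + j : ℕ) : ℝ) = (k:ℝ) + j := by push_cast; ring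
    calc cL * a k ≤ cL * (c₂ * (k:ℝ)^(-s) * Real.log k ^ α) :=
          mul_le_mul_of_nonneg_left (hupp k hk) hcL0.le
      _ = (c₁ * ((2:ℝ)^(-s) * (k:ℝ)^(-s))) * (min 1 ((2:ℝ)^α) * Real.log k ^ α) := key
      _ ≤ (c₁ * ((2:ℝ)^(-s) * (k:ℝ)^(-s))) * Real.log ((k:ℝ) + j) ^ α := by
          refine mul_le_mul_of_nonneg_left piece2 ?_
          have h2s := Real.rpow_nonneg (by norm_num : (0:ℝ) ≤ 2) (-s)
          have hks := Real.rpow_nonneg hk0.le (-s)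
          positivity
      _ ≤ (c₁ * ((k:ℝ) + j)^(-s)) * Real.log ((k:ℝ) + j) ^ α := by
          exact mul_le_mul_of_nonneg_right
            (mul_le_mul_of_nonneg_left piece1 hc₁.le)
            (Real.rpow_nonneg hLn0.le α)
      _ = c₁ * ((k + j : ℕ):ℝ)^(-s) * Real.log ((k + j : ℕ):ℝ) ^ α := by rw [cast1]
      _ ≤ a (k + j) := hlow (k + j) hn2
  -- summability for all k
  have S2 : Summable (fun j : ℕ => a (2 + j) ^ 2) := (main 2 le_rfl).1
  have hsummable : ∀ k : ℕ, Summable (fun j : ℕ => a (k + j) ^ 2) := by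
    intro k
    rcases le_total 2 k with hk | hk
    · have h := (summable_nat_add_iff (f := fun j : ℕ => a (2 + j) ^ 2) (k - 2)).mpr S2
      have e : (fun n : ℕ => a (2 + (n + (k - 2))) ^ 2) = fun n : ℕ => a (k + n) ^ 2 := by
        funext n; congr 2; omega
      rw [e] at h
      exact h
    · apply (summable_nat_add_iff (f := fun j : ℕ => a (k + j) ^ 2) (2 - k)).mp
      have e : (fun n : ℕ => a (k + (n + (2 - k))) ^ 2) = fun n : ℕ => a (2 + n) ^ 2 := by
        funext n; congr 2; omega
      rw [e]
      exact S2
  refine ⟨hsummable, ?_⟩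
  set C₂ : ℝ := K^2 * (q-1)⁻¹ * (2:ℝ)^(q-1) with hC₂def
  have hC₂0 : 0 < C₂ := by
    rw [hC₂def]
    have h1 : (0:ℝ) < (q-1)⁻¹ := inv_pos.mpr (by linarith)
    have h2 : (0:ℝ) < (2:ℝ)^(q-1) := Real.rpow_pos_of_pos two_pos _
    positivity
  refine ⟨min cL (Real.sqrt C₂), max cL (Real.sqrt C₂),
    lt_min hcL0 (Real.sqrt_pos.mpr hC₂0), min_le_max, ?_⟩
  intro k hk
  have hk0 : (0:ℝ) < k := by exact_mod_cast Nat.lt_of_lt_of_le Nat.zero_lt_two hk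
  have hak0 : 0 < a k := hpos k (by omega)
  have hS := hsummable k
  have hTnn : ∀ j : ℕ, 0 ≤ a (k + j) ^ 2 := fun j => sq_nonneg _
  constructor
  · -- lower bound
    have hsum_ge : (k:ℝ) * (cL * a k)^2 ≤ ∑' j : ℕ, a (k + j) ^ 2 := by
      have h1 : ∀ j ∈ Finset.range k, (cL * a k)^2 ≤ a (k + j) ^ 2 := by
        intro j hj
        exact pow_le_pow_left₀ (by positivity) (low2 k j hk (Finset.mem_range.mp hj)) 2
      calc (k:ℝ) * (cL * a k)^2 = (Finset.range k).card • ((cL * a k)^2) := by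
            rw [Finset.card_range, nsmul_eq_mul]
        _ ≤ ∑ j ∈ Finset.range k, a (k + j) ^ 2 := Finset.card_nsmul_le_sum _ _ _ h1
        _ ≤ ∑' j : ℕ, a (k + j) ^ 2 := Summable.sum_le_tsum _ (fun j _ => hTnn j) hS
    have h2 : (cL * a k)^2 ≤ (1 / (k:ℝ)) * ∑' j : ℕ, a (k + j) ^ 2 := by
      rw [← sub_nonneg]
      have e : (1 / (k:ℝ)) * ∑' j : ℕ, a (k + j) ^ 2 - (cL * a k)^2
          = (1 / (k:ℝ)) * ((∑' j : ℕ, a (k + j) ^ 2) - (k:ℝ) * (cL * a k)^2) := by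
        field_simp
      rw [e]
      exact mul_nonneg (by positivity) (by linarith)
    calc min cL (Real.sqrt C₂) * a k ≤ cL * a k := by
          exact mul_le_mul_of_nonneg_right (min_le_left _ _) hak0.le
      _ = Real.sqrt ((cL * a k)^2) := (Real.sqrt_sq (by positivity)).symm
      _ ≤ betaSeq a k := Real.sqrt_le_sqrt h2
  · -- upper bound
    have hT := (main k hk).2
    have h2 : (1 / (k:ℝ)) * ∑' j : ℕ, a (k + j) ^ 2 ≤ C₂ * a k ^ 2 := by
      have e : C₂ * a k ^ 2 = (1 / (k:ℝ)) * (C₂ * (a k ^ 2 * k)) := by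
        field_simp
      rw [e]
      exact mul_le_mul_of_nonneg_left hT (by positivity)
    calc betaSeq a k ≤ Real.sqrt (C₂ * a k ^ 2) := Real.sqrt_le_sqrt h2
      _ = Real.sqrt C₂ * a k := by
          rw [Real.sqrt_mul hC₂0.le, Real.sqrt_sq hak0.le]
      _ ≤ max cL (Real.sqrt C₂) * a k := by
          exact mul_le_mul_of_nonneg_right (le_max_right _ _) hak0.le
end

section
/- Let (a_n)_{n≥1} be a sequence of positive reals and suppose there exist constants 0 < c₁ ≤ c₂ and α < −1/2 with c₁·n^{−1/2}·log^{α}(n) ≤ a_n ≤ c₂·n^{−1/2}·log^{α}(n) for all n ≥ 2. Then the sequence β_k = ((1/k)·Σ_{j ≥ k} a_j²)^{1/2} is finite for all k and satisfies β_k ≍ a_k·√(log k), i.e., there are constants 0 < c ≤ C with c·a_k·√(log k) ≤ β_k ≤ C·a_k·√(log k) for all k ≥ 2. -/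
open Real MeasureTheory Set Filter Topology

lemma myHasDeriv {q : ℝ} (hq : q ≠ 0) {x : ℝ} (hx : 1 < x) :
    HasDerivAt (fun y => Real.log y ^ q / q) (Real.log x ^ (q - 1) / x) x := by
  have hx0 : 0 < x := lt_trans one_pos hx
  have hlog : 0 < Real.log x := Real.log_pos hx
  have h1 : HasDerivAt Real.log x⁻¹ x := Real.hasDerivAt_log hx0.ne'
  have h2 : HasDerivAt (fun y => Real.log y ^ q) (q * Real.log x ^ (q - 1) * x⁻¹) x :=
    (Real.hasDerivAt_rpow_const (p := q) (Or.inl hlog.ne')).comp x h1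
  have h3 := h2.div_const q
  refine h3.congr_deriv ?_
  rw [div_eq_iff hq]
  ring

lemma myTendsto {q : ℝ} (hq : q < 0) :
    Tendsto (fun x : ℝ => Real.log x ^ q / q) atTop (𝓝 0) := by
  have h : Tendsto (fun x : ℝ => x ^ q) atTop (𝓝 0) := by
    have := tendsto_rpow_neg_atTop (y := -q) (by linarith)
    simpa using this
  have := (h.comp Real.tendsto_log_atTop).div_const q
  simpa using this

lemma myIntegral {q : ℝ} (hq : q < 0) {k : ℝ} (hk : 2 ≤ k) :
    IntegrableOn (fun x => Real.log x ^ (q - 1) / x) (Ioi k) ∧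
      ∫ x in Ioi k, Real.log x ^ (q - 1) / x = Real.log k ^ q / (-q) := by
  have h1k : (1 : ℝ) < k := by linarith
  have hderiv : ∀ x ∈ Ici k, HasDerivAt (fun y => Real.log y ^ q / q)
      (Real.log x ^ (q - 1) / x) x := fun x hx => myHasDeriv hq.ne (lt_of_lt_of_le h1k hx)
  have hpos : ∀ x ∈ Ioi k, 0 ≤ Real.log x ^ (q - 1) / x := fun x hx => by
    have : (0:ℝ) < x := by have := hx.out; linarith
    exact div_nonneg (Real.rpow_nonneg (Real.log_nonneg (by linarith [hx.out])) _) this.le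
  have htend := myTendsto hq
  refine ⟨integrableOn_Ioi_deriv_of_nonneg' hderiv hpos htend, ?_⟩
  rw [integral_Ioi_of_hasDerivAt_of_nonneg' hderiv hpos htend, zero_sub, div_neg]

lemma myAnti {r : ℝ} (hr : r ≤ 0) {x y : ℝ} (hx : 2 ≤ x) (hxy : x ≤ y) :
    Real.log y ^ r / y ≤ Real.log x ^ r / x := by
  have hx0 : (0:ℝ) < x := by linarith
  have hlx : 0 < Real.log x := Real.log_pos (by linarith)
  have hll : Real.log x ≤ Real.log y := Real.log_le_log hx0 hxy
  have h1 : Real.log y ^ r ≤ Real.log x ^ r := Real.rpow_le_rpow_of_nonpos hlx hll hr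
  have h2 : (0:ℝ) ≤ Real.log x ^ r := Real.rpow_nonneg hlx.le _
  exact div_le_div₀ h2 h1 hx0 hxy

lemma myTail {q : ℝ} (hq : q < 0) {k : ℕ} (hk : 2 ≤ k) :
    Summable (fun j : ℕ => Real.log ((k : ℝ) + j) ^ (q - 1) / ((k : ℝ) + j)) ∧
      Real.log k ^ q / (-q) ≤ ∑' j : ℕ, Real.log ((k : ℝ) + j) ^ (q - 1) / ((k : ℝ) + j) ∧
      ∑' j : ℕ, Real.log ((k : ℝ) + j) ^ (q - 1) / ((k : ℝ) + j) ≤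
        Real.log k ^ (q - 1) / k + Real.log k ^ q / (-q) := by
  set G : ℝ → ℝ := fun x => Real.log x ^ (q - 1) / x with hGdef
  have hK2 : (2 : ℝ) ≤ (k : ℝ) := by exact_mod_cast hk
  obtain ⟨hint, hval⟩ := myIntegral hq hK2
  have hGnonneg : ∀ x : ℝ, 2 ≤ x → 0 ≤ G x := fun x hx =>
    div_nonneg (Real.rpow_nonneg (Real.log_nonneg (by linarith)) _) (by linarith)
  set I : ℕ → ℝ := fun j => ∫ x in ((k : ℝ) + j)..((k : ℝ) + j + 1), G x with hIdef
  have hcj : ∀ j : ℕ, (0:ℝ) ≤ (j:ℝ) := fun j => Nat.cast_nonneg j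
  have hsub : ∀ j : ℕ, Ioc ((k : ℝ) + j) ((k : ℝ) + j + 1) ⊆ Ioi (k : ℝ) := by
    intro j x hx
    exact lt_of_le_of_lt (by linarith [hcj j]) hx.1
  have hIInt : ∀ j : ℕ, IntervalIntegrable G volume ((k : ℝ) + j) ((k : ℝ) + j + 1) := by
    intro j
    rw [intervalIntegrable_iff_integrableOn_Ioc_of_le (by linarith)]
    exact hint.mono_set (hsub j)
  have hIoc : ∀ j : ℕ, I j = ∫ x in Ioc ((k : ℝ) + j) ((k : ℝ) + j + 1), G x := fun j =>
    intervalIntegral.integral_of_le (by linarith)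
  have hconst_int : ∀ (c : ℝ) (j : ℕ),
      ∫ _x in Ioc ((k : ℝ) + j) ((k : ℝ) + j + 1), c = c := by
    intro c j
    rw [setIntegral_const, Real.volume_real_Ioc]
    norm_num
  have hIconst : ∀ (c : ℝ) (j : ℕ), IntegrableOn (fun _ => c) (Ioc ((k:ℝ)+j) ((k:ℝ)+j+1)) := by
    intro c j
    exact integrableOn_const measure_Ioc_lt_top.ne
  have hI_le : ∀ j : ℕ, I j ≤ G ((k : ℝ) + j) := by
    intro j
    rw [hIoc j]
    calc ∫ x in Ioc ((k:ℝ)+j) ((k:ℝ)+j+1), G x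
        ≤ ∫ _x in Ioc ((k:ℝ)+j) ((k:ℝ)+j+1), G ((k:ℝ)+j) := by
          apply setIntegral_mono_on (hint.mono_set (hsub j)) (hIconst _ j) measurableSet_Ioc
          intro x hx
          exact myAnti (by linarith) (by linarith [hcj j]) hx.1.le
      _ = G ((k:ℝ)+j) := hconst_int _ j
  have hle_I : ∀ j : ℕ, G ((k : ℝ) + j + 1) ≤ I j := by
    intro j
    rw [hIoc j]
    calc G ((k:ℝ)+j+1) = ∫ _x in Ioc ((k:ℝ)+j) ((k:ℝ)+j+1), G ((k:ℝ)+j+1) := (hconst_int _ j).symm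
      _ ≤ ∫ x in Ioc ((k:ℝ)+j) ((k:ℝ)+j+1), G x := by
          apply setIntegral_mono_on (hIconst _ j) (hint.mono_set (hsub j)) measurableSet_Ioc
          intro x hx
          exact myAnti (by linarith) (by linarith [hcj j, hx.1]) hx.2
  have hInonneg : ∀ j : ℕ, 0 ≤ I j := by
    intro j
    rw [hIoc j]
    exact setIntegral_nonneg measurableSet_Ioc fun x hx => hGnonneg x (by linarith [hcj j, hx.1])
  have hsum_eq : ∀ n : ℕ, ∑ j ∈ Finset.range n, I j = ∫ x in (k : ℝ)..((k : ℝ) + n), G x := by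
    intro n
    have hints : ∀ i : ℕ, i < n →
        IntervalIntegrable G volume ((k:ℝ) + i) ((k:ℝ) + (i + 1 : ℕ)) := by
      intro i _
      have : ((k:ℝ) + ((i + 1 : ℕ) : ℝ)) = (k:ℝ) + i + 1 := by push_cast; ring
      rw [this]
      exact hIInt i
    have h := intervalIntegral.sum_integral_adjacent_intervals
      (a := fun j : ℕ => (k : ℝ) + j) (n := n) (f := G) (μ := volume) hints
    calc ∑ j ∈ Finset.range n, I j
        = ∑ j ∈ Finset.range n, ∫ x in ((k:ℝ)+j)..((k:ℝ)+((j+1:ℕ):ℝ)), G x := by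
          apply Finset.sum_congr rfl
          intro j _
          have : ((k:ℝ) + ((j + 1 : ℕ) : ℝ)) = (k:ℝ) + j + 1 := by push_cast; ring
          rw [this]
      _ = ∫ x in ((k:ℝ)+((0:ℕ):ℝ))..((k:ℝ)+n), G x := h
      _ = ∫ x in (k : ℝ)..((k : ℝ) + n), G x := by norm_num
  have htendI : Tendsto (fun n : ℕ => ∫ x in (k : ℝ)..((k : ℝ) + n), G x) atTop
      (𝓝 (∫ x in Ioi (k : ℝ), G x)) :=
    intervalIntegral_tendsto_integral_Ioi _ hint
      (tendsto_atTop_add_const_left _ _ tendsto_natCast_atTop_atTop)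
  have hbdd : ∀ n : ℕ, ∑ j ∈ Finset.range n, I j ≤ ∫ x in Ioi (k : ℝ), G x := by
    intro n
    rw [hsum_eq n, intervalIntegral.integral_of_le (by linarith [hcj n])]
    apply setIntegral_mono_set hint
    · exact (ae_restrict_mem measurableSet_Ioi).mono fun x hx => hGnonneg x (by
        have : (k:ℝ) < x := hx
        linarith)
    · exact HasSubset.Subset.eventuallyLE Ioc_subset_Ioi_self
  have hsI : Summable I := summable_of_sum_range_le hInonneg hbdd
  have htsumI : ∑' j, I j = ∫ x in Ioi (k : ℝ), G x := by
    refine tendsto_nhds_unique hsI.hasSum.tendsto_sum_nat ?_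
    have : (fun n : ℕ => ∑ j ∈ Finset.range n, I j)
        = fun n : ℕ => ∫ x in (k : ℝ)..((k : ℝ) + n), G x := funext hsum_eq
    rw [this]
    exact htendI
  set Gk : ℕ → ℝ := fun j => G ((k : ℝ) + j) with hGk
  have hcast : ∀ j : ℕ, Gk (j + 1) = G ((k:ℝ) + j + 1) := by
    intro j
    simp only [hGk]
    push_cast
    ring_nf
  have hGknonneg : ∀ j : ℕ, 0 ≤ Gk j := fun j => hGnonneg _ (by linarith [hcj j])
  have hs1 : Summable fun j : ℕ => Gk (j + 1) := by
    apply hsI.of_nonneg_of_le (fun j => hGknonneg (j + 1))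
    intro j
    rw [hcast j]
    exact hle_I j
  have hsGk : Summable Gk := (summable_nat_add_iff 1).mp hs1
  refine ⟨hsGk, ?_, ?_⟩
  · rw [← hval, ← htsumI]
    exact Summable.tsum_le_tsum hI_le hsI hsGk
  · have h0 : ∑' j, Gk j = Gk 0 + ∑' j, Gk (j + 1) := Summable.tsum_eq_zero_add hsGk
    have hG0 : Gk 0 = G (k : ℝ) := by simp [hGk]
    have h2 : ∑' j, Gk (j + 1) ≤ ∑' j, I j := by
      apply Summable.tsum_le_tsum _ hs1 hsI
      intro j
      rw [hcast j]
      exact hle_I j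
    rw [h0, hG0]
    have : ∑' j, I j = Real.log k ^ q / (-q) := by rw [htsumI, hval]
    rw [this] at h2
    exact (add_le_add_iff_left _).mpr h2

/-- **Lemma (case `s = 1/2`, `α < -1/2`).** If `a_n ≍ n^{-1/2} log^α n` with `α < -1/2`, then
the tail sums `∑_{j ≥ k} a_j²` are finite and `β_k ≍ a_k √(log k)`. -/
theorem beta_asymp_of_half (a : ℕ → ℝ) (hpos : ∀ n, 1 ≤ n → 0 < a n)
    (c₁ c₂ α : ℝ) (hc₁ : 0 < c₁) (hc : c₁ ≤ c₂) (hα : α < -(1 / 2))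
    (hlow : ∀ n : ℕ, 2 ≤ n → c₁ * (n : ℝ) ^ (-(1 / 2) : ℝ) * Real.log n ^ α ≤ a n)
    (hupp : ∀ n : ℕ, 2 ≤ n → a n ≤ c₂ * (n : ℝ) ^ (-(1 / 2) : ℝ) * Real.log n ^ α) :
    (∀ k : ℕ, Summable fun j : ℕ => a (k + j) ^ 2) ∧
      ∃ c C : ℝ, 0 < c ∧ c ≤ C ∧ ∀ k : ℕ, 2 ≤ k →
        c * (a k * Real.sqrt (Real.log k)) ≤ betaSeq a k ∧
          betaSeq a k ≤ C * (a k * Real.sqrt (Real.log k)) := by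
  have hc₂ : 0 < c₂ := lt_of_lt_of_le hc₁ hc
  set q : ℝ := 2 * α + 1 with hqdef
  have hq : q < 0 := by rw [hqdef]; linarith
  -- squared bounds on a n
  have hsq : ∀ n : ℕ, 2 ≤ n → c₁ ^ 2 * (Real.log n ^ (q - 1) / n) ≤ a n ^ 2 ∧
      a n ^ 2 ≤ c₂ ^ 2 * (Real.log n ^ (q - 1) / n) := by
    intro n hn
    have hn2 : (2 : ℝ) ≤ (n : ℝ) := by exact_mod_cast hn
    have hn0 : (0 : ℝ) < n := by linarith
    have hL : 0 < Real.log n := Real.log_pos (by linarith)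
    have key : ∀ c : ℝ, (c * (n : ℝ) ^ (-(1 / 2) : ℝ) * Real.log n ^ α) ^ 2
        = c ^ 2 * (Real.log n ^ (q - 1) / n) := by
      intro c
      have e1 : ((n : ℝ) ^ (-(1 / 2) : ℝ)) ^ 2 = (n : ℝ)⁻¹ := by
        rw [← Real.rpow_natCast ((n : ℝ) ^ (-(1 / 2) : ℝ)) 2, ← Real.rpow_mul hn0.le]
        norm_num [Real.rpow_neg_one]
      have e2 : (Real.log n ^ α) ^ 2 = Real.log n ^ (q - 1) := by
        rw [← Real.rpow_natCast (Real.log n ^ α) 2, ← Real.rpow_mul hL.le]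
        congr 1
        rw [hqdef]
        push_cast
        ring
      rw [mul_pow, mul_pow, e1, e2, div_eq_mul_inv]
      ring
    constructor
    · have h := hlow n hn
      have hb : 0 ≤ c₁ * (n : ℝ) ^ (-(1 / 2) : ℝ) * Real.log n ^ α :=
        mul_nonneg (mul_nonneg hc₁.le (Real.rpow_nonneg hn0.le _)) (Real.rpow_nonneg hL.le _)
      have := pow_le_pow_left₀ hb h 2
      rwa [key c₁] at this
    · have h := hupp n hn
      have hb : 0 ≤ a n := (hpos n (by omega)).le
      have := pow_le_pow_left₀ hb h 2
      rwa [key c₂] at this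
  -- summability
  have hq1 : q - 1 ≤ 0 := by linarith
  have hcastk : ∀ k j : ℕ, ((k + j : ℕ) : ℝ) = (k : ℝ) + (j : ℝ) := by
    intro k j; push_cast; ring
  obtain ⟨hsG2, -, -⟩ := myTail hq (le_refl 2)
  have hs2 : Summable fun j : ℕ => a (2 + j) ^ 2 := by
    apply Summable.of_nonneg_of_le (fun j => sq_nonneg _) _ (hsG2.mul_left (c₂ ^ 2))
    intro j
    have h := (hsq (2 + j) (by omega)).2
    rwa [hcastk 2 j] at h
  have hsa : Summable fun n : ℕ => a n ^ 2 := by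
    apply (summable_nat_add_iff 2).mp
    apply hs2.congr
    intro j
    rw [add_comm]
  have hsummK : ∀ k : ℕ, Summable fun j : ℕ => a (k + j) ^ 2 := by
    intro k
    apply ((summable_nat_add_iff k).mpr hsa).congr
    intro j
    rw [add_comm]
  refine ⟨hsummK, ?_⟩
  -- constants
  set p' : ℝ := -q with hp'def
  have hp' : 0 < p' := by rw [hp'def]; linarith
  have hlog2 : 0 < Real.log 2 := Real.log_pos one_lt_two
  set M : ℝ := 1 / (2 * Real.log 2) + 1 / p' with hMdef
  have hM0 : 0 < M := by positivity
  have hsp' : 0 < Real.sqrt p' := Real.sqrt_pos.mpr hp'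
  refine ⟨c₁ / (c₂ * Real.sqrt p'), c₂ * Real.sqrt M / c₁, by positivity, ?_, ?_⟩
  · -- c ≤ C
    have h1 : Real.sqrt (1 / p') ≤ Real.sqrt M := Real.sqrt_le_sqrt (by
      rw [hMdef]; exact le_add_of_nonneg_left (by positivity))
    have h2 : Real.sqrt (1 / p') = 1 / Real.sqrt p' := by
      rw [one_div, Real.sqrt_inv, one_div]
    calc c₁ / (c₂ * Real.sqrt p') ≤ c₂ / (c₁ * Real.sqrt p') := by
          rw [div_le_div_iff₀ (by positivity) (by positivity)]
          have hh : c₁ * c₁ ≤ c₂ * c₂ := mul_le_mul hc hc hc₁.le hc₂.le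
          nlinarith [hsp'.le, hh]
      _ = c₂ * (1 / Real.sqrt p') / c₁ := by
          rw [mul_one_div, div_div, mul_comm]
      _ = c₂ * Real.sqrt (1 / p') / c₁ := by rw [h2]
      _ ≤ c₂ * Real.sqrt M / c₁ := by gcongr
  · -- main bounds
    intro k hk
    obtain ⟨hsGk, hTlow, hTupp⟩ := myTail hq hk
    set K : ℝ := (k : ℝ) with hKdef
    have hK2 : (2 : ℝ) ≤ K := by rw [hKdef]; exact_mod_cast hk
    have hK0 : (0 : ℝ) < K := by linarith
    set L : ℝ := Real.log K with hLdef
    have hL : 0 < L := Real.log_pos (by linarith)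
    have hL2 : Real.log 2 ≤ L := Real.log_le_log two_pos hK2
    set E : ℝ := L ^ q with hEdef
    have hE : 0 < E := Real.rpow_pos_of_pos hL _
    set T : ℝ := ∑' j : ℕ, Real.log (K + j) ^ (q - 1) / (K + j) with hTdef
    set S : ℝ := ∑' j : ℕ, a (k + j) ^ 2 with hSdef
    have hS_lb : c₁ ^ 2 * T ≤ S := by
      rw [hTdef, hSdef, ← tsum_mul_left]
      apply Summable.tsum_le_tsum _ (hsGk.mul_left _) (hsummK k)
      intro j
      have h := (hsq (k + j) (by omega)).1
      rwa [hcastk k j] at h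
    have hS_ub : S ≤ c₂ ^ 2 * T := by
      rw [hTdef, hSdef, ← tsum_mul_left]
      apply Summable.tsum_le_tsum _ (hsummK k) (hsGk.mul_left _)
      intro j
      have h := (hsq (k + j) (by omega)).2
      rwa [hcastk k j] at h
    have hT_lb : E / p' ≤ T := hTlow
    have hT_ub : T ≤ M * E := by
      have e3 : Real.log K ^ (q - 1) = E / L := by
        rw [hEdef, hLdef, Real.rpow_sub hL, Real.rpow_one]
      have h4 : Real.log K ^ (q - 1) / K = E / (L * K) := by
        rw [e3, div_div]
      have h5 : E / (L * K) ≤ E / (2 * Real.log 2) := by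
        apply div_le_div_of_nonneg_left hE.le (by positivity)
        nlinarith
      calc T ≤ Real.log K ^ (q - 1) / K + E / p' := hTupp
        _ ≤ E / (2 * Real.log 2) + E / p' := by rw [h4]; gcongr
        _ = M * E := by rw [hMdef]; field_simp
    -- a k squared bounds
    have hak_lb : c₁ ^ 2 * (E / (L * K)) ≤ a k ^ 2 := by
      have h := (hsq k hk).1
      have e3 : Real.log K ^ (q - 1) / K = E / (L * K) := by
        rw [hEdef, hLdef, Real.rpow_sub hL, Real.rpow_one, div_div]
      rw [← hKdef] at h
      rwa [e3] at h
    have hak_ub : a k ^ 2 ≤ c₂ ^ 2 * (E / (L * K)) := by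
      have h := (hsq k hk).2
      have e3 : Real.log K ^ (q - 1) / K = E / (L * K) := by
        rw [hEdef, hLdef, Real.rpow_sub hL, Real.rpow_one, div_div]
      rw [← hKdef] at h
      rwa [e3] at h
    have hak0 : 0 ≤ a k := (hpos k (by omega)).le
    set X : ℝ := 1 / K * S with hXdef
    have hX0 : 0 ≤ X := by
      apply mul_nonneg (by positivity)
      exact tsum_nonneg fun j => sq_nonneg _
    have hbeta : betaSeq a k = Real.sqrt X := rfl
    have hsqL : Real.sqrt L ^ 2 = L := Real.sq_sqrt hL.le
    constructor
    · -- lower bound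
      rw [hbeta]
      apply (Real.le_sqrt (by positivity) hX0).mpr
      have csq : (c₁ / (c₂ * Real.sqrt p')) ^ 2 = c₁ ^ 2 / (c₂ ^ 2 * p') := by
        rw [div_pow, mul_pow, Real.sq_sqrt hp'.le]
      calc (c₁ / (c₂ * Real.sqrt p') * (a k * Real.sqrt L)) ^ 2
          = (c₁ / (c₂ * Real.sqrt p')) ^ 2 * (a k ^ 2 * L) := by
            rw [mul_pow, mul_pow, hsqL]
        _ ≤ (c₁ / (c₂ * Real.sqrt p')) ^ 2 * (c₂ ^ 2 * (E / (L * K)) * L) := by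
            gcongr
        _ = 1 / K * (c₁ ^ 2 * (E / p')) := by
            rw [csq]
            field_simp
            all_goals ring
        _ ≤ 1 / K * (c₁ ^ 2 * T) := by gcongr
        _ ≤ X := by rw [hXdef]; gcongr
    · -- upper bound
      rw [hbeta]
      have Csq : (c₂ * Real.sqrt M / c₁) ^ 2 = c₂ ^ 2 * M / c₁ ^ 2 := by
        rw [div_pow, mul_pow, Real.sq_sqrt hM0.le]
      have hfin : X ≤ (c₂ * Real.sqrt M / c₁ * (a k * Real.sqrt L)) ^ 2 := by
        calc X ≤ 1 / K * (c₂ ^ 2 * T) := by rw [hXdef]; gcongr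
          _ ≤ 1 / K * (c₂ ^ 2 * (M * E)) := by gcongr
          _ = (c₂ * Real.sqrt M / c₁) ^ 2 * (c₁ ^ 2 * (E / (L * K)) * L) := by
              rw [Csq]
              field_simp
              all_goals ring
          _ ≤ (c₂ * Real.sqrt M / c₁) ^ 2 * (a k ^ 2 * L) := by
              gcongr
          _ = (c₂ * Real.sqrt M / c₁ * (a k * Real.sqrt L)) ^ 2 := by
              rw [mul_pow, mul_pow, hsqL]
      calc Real.sqrt X ≤ Real.sqrt ((c₂ * Real.sqrt M / c₁ * (a k * Real.sqrt L)) ^ 2) :=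
            Real.sqrt_le_sqrt hfin
        _ = c₂ * Real.sqrt M / c₁ * (a k * Real.sqrt L) := Real.sqrt_sq (by positivity)
end
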